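/- For words v1, v2 over an alphabet A, v1·v2 = v2·v1 if and only if there exists a word w and natural numbers p, q such that v1 = w^p and v2 = w^q. -/
import Mathlib

private lemma aux_comm {A : Type*} : ∀ n (v1 v2 : FreeMonoid A),
    v1.length + v2.length ≤ n → v1 * v2 = v2 * v1 →
    ∃ (w : FreeMonoid A) (p q : ℕ), v1 = w ^ p ∧ v2 = w ^ q := by
  intro n
  induction n with
  | zero =>
    intro v1 v2 hn _
    have h1 : v1.length = 0 := by omega
    have h2 : v2.length = 0 := by omega
    exact ⟨1, 0, 0, by simpa using FreeMonoid.length_eq_zero.mp h1,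
      by simpa using FreeMonoid.length_eq_zero.mp h2⟩
  | succ n ih =>
    intro v1 v2 hn h
    -- wlog v1.length ≤ v2.length
    rcases le_total v1.length v2.length with hle | hle
    · rcases Nat.eq_zero_or_pos v1.length with h0 | hpos
      · exact ⟨v2, 0, 1, by simpa using FreeMonoid.length_eq_zero.mp h0, (pow_one v2).symm⟩
      · -- v1 is a prefix of v2
        have hpre : FreeMonoid.toList v1 <+: FreeMonoid.toList v2 := by
          apply List.prefix_of_prefix_length_le (l₃ := FreeMonoid.toList v1 ++ FreeMonoid.toList v2)
          · exact ⟨v2, rfl⟩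
          · exact ⟨v1, congrArg FreeMonoid.toList h.symm⟩
          · exact hle
        obtain ⟨v3, hv3⟩ := hpre
        have hv2 : v2 = v1 * FreeMonoid.ofList v3 := hv3.symm
        set v3' := FreeMonoid.ofList v3
        subst hv2
        have h' : v1 * v3' = v3' * v1 :=
          mul_left_cancel (a := v1) (by rw [h, mul_assoc])
        have hlen : v1.length + v3'.length ≤ n := by
          have := FreeMonoid.length_mul v1 v3'
          omega
        obtain ⟨w, p, q, hp, hq⟩ := ih v1 v3' hlen h'
        exact ⟨w, p, p + q, hp, by rw [hp, hq, ← pow_add]⟩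
    · rcases Nat.eq_zero_or_pos v2.length with h0 | hpos
      · exact ⟨v1, 1, 0, (pow_one v1).symm, by simpa using FreeMonoid.length_eq_zero.mp h0⟩
      · have hpre : FreeMonoid.toList v2 <+: FreeMonoid.toList v1 := by
          apply List.prefix_of_prefix_length_le (l₃ := FreeMonoid.toList v2 ++ FreeMonoid.toList v1)
          · exact ⟨v1, rfl⟩
          · exact ⟨v2, congrArg FreeMonoid.toList h⟩
          · exact hle
        obtain ⟨v3, hv3⟩ := hpre
        have hv1 : v1 = v2 * FreeMonoid.ofList v3 := hv3.symm
        set v3' := FreeMonoid.ofList v3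
        subst hv1
        have h' : v2 * v3' = v3' * v2 :=
          mul_left_cancel (a := v2) (by rw [← h, mul_assoc])
        have hlen : v2.length + v3'.length ≤ n := by
          have := FreeMonoid.length_mul v2 v3'
          omega
        obtain ⟨w, p, q, hp, hq⟩ := ih v2 v3' hlen h'
        exact ⟨w, p + q, p, by rw [hp, hq, ← pow_add], hp⟩

/-- Commutativity equation: `v1 v2 = v2 v1` iff both are powers of a common word. -/
theorem stmt0 {A : Type*} (v1 v2 : FreeMonoid A) :
    v1 * v2 = v2 * v1 ↔ ∃ (w : FreeMonoid A) (p q : ℕ), v1 = w ^ p ∧ v2 = w ^ q := by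
  constructor
  · intro h
    exact aux_comm (v1.length + v2.length) v1 v2 le_rfl h
  · rintro ⟨w, p, q, rfl, rfl⟩
    rw [← pow_add, ← pow_add, Nat.add_comm]
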